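/- For every σ > 0 and μ ∈ ℝ, the DMIM of the Gaussian density φ(x) = (2πσ²)^{-1/2}·e^{-(x−μ)²/(2σ²)} is given by the convergent series ∫_ℝ φ(x)·e^{-φ(x)} dx = 1 + ∑_{n=1}^∞ ((−1)^n / n!) · (1/√(n+1)) · (2πσ²)^{-n/2}. -/

import Mathlib

open MeasureTheory Real

/-- DMIM of the Gaussian density: the series
`∑_{n=1}^∞ ((-1)^n/n!) (1/√(n+1)) (2πσ²)^{-n/2}` converges (here reindexed over `n : ℕ`
via `n ↦ n+1`) and `∫ φ(x) e^{-φ(x)} dx = 1 +` its sum. -/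
theorem dmim_gaussian_series (σ μ : ℝ) (hσ : 0 < σ) :
    Summable (fun n : ℕ =>
        ((-1 : ℝ) ^ (n + 1) / (n + 1).factorial) * (Real.sqrt ((n : ℝ) + 2))⁻¹ *
          (2 * π * σ ^ 2) ^ (-((n : ℝ) + 1) / 2)) ∧
      (∫ x : ℝ,
          ((Real.sqrt (2 * π * σ ^ 2))⁻¹ * Real.exp (-(x - μ) ^ 2 / (2 * σ ^ 2))) *
            Real.exp
              (-((Real.sqrt (2 * π * σ ^ 2))⁻¹ * Real.exp (-(x - μ) ^ 2 / (2 * σ ^ 2))))) =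
        1 + ∑' n : ℕ,
          ((-1 : ℝ) ^ (n + 1) / (n + 1).factorial) * (Real.sqrt ((n : ℝ) + 2))⁻¹ *
            (2 * π * σ ^ 2) ^ (-((n : ℝ) + 1) / 2) := by
  have hπ := Real.pi_pos
  set a : ℝ := 2 * π * σ ^ 2 with ha_def
  have ha : 0 < a := by positivity
  set c : ℝ := (Real.sqrt a)⁻¹ with hc_def
  have hsa : 0 < Real.sqrt a := Real.sqrt_pos.mpr ha
  have hc : 0 < c := by positivity
  set φ : ℝ → ℝ := fun x => c * Real.exp (-(x - μ) ^ 2 / (2 * σ ^ 2)) with hφ_def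
  have hφpos : ∀ x, 0 < φ x := fun x => by positivity
  have hφcont : Continuous φ := by
    apply Continuous.mul continuous_const
    exact (Continuous.div_const (by continuity) _).rexp
  set f : ℕ → ℝ → ℝ := fun k x => ((-1 : ℝ) ^ k / k.factorial) * φ x ^ (k + 1) with hf_def
  -- rewrite of φ powers as gaussians
  have hφpow : ∀ (k : ℕ) (x : ℝ),
      φ x ^ (k + 1) = c ^ (k + 1) *
        Real.exp (-(((k : ℝ) + 1) / (2 * σ ^ 2)) * (x - μ) ^ 2) := by
    intro k x
    rw [hφ_def, mul_pow, ← Real.exp_nat_mul]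
    congr 2
    push_cast
    field_simp
  have hbpos : ∀ k : ℕ, (0 : ℝ) < ((k : ℝ) + 1) / (2 * σ ^ 2) := fun k => by positivity
  have hint : ∀ k : ℕ, Integrable (fun x => φ x ^ (k + 1)) := by
    intro k
    have : Integrable (fun x : ℝ =>
        c ^ (k + 1) * Real.exp (-(((k : ℝ) + 1) / (2 * σ ^ 2)) * (x - μ) ^ 2)) := by
      apply Integrable.const_mul
      have h1 := integrable_exp_neg_mul_sq (hbpos k)
      exact h1.comp_sub_right μ
    exact this.congr (Filter.Eventually.of_forall fun x => (hφpow k x).symm)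
  -- value of the gaussian integrals
  have hI : ∀ k : ℕ, (∫ x : ℝ, φ x ^ (k + 1)) = c ^ k / Real.sqrt ((k : ℝ) + 1) := by
    intro k
    have h1 : (∫ x : ℝ, φ x ^ (k + 1)) =
        c ^ (k + 1) * ∫ x : ℝ, Real.exp (-(((k : ℝ) + 1) / (2 * σ ^ 2)) * (x - μ) ^ 2) := by
      rw [← integral_const_mul]
      exact integral_congr_ae (Filter.Eventually.of_forall fun x => hφpow k x)
    rw [h1, integral_sub_right_eq_self
        (fun x : ℝ => Real.exp (-(((k : ℝ) + 1) / (2 * σ ^ 2)) * x ^ 2)) μ,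
      integral_gaussian]
    have h2 : π / (((k : ℝ) + 1) / (2 * σ ^ 2)) = a / ((k : ℝ) + 1) := by
      rw [ha_def]
      field_simp
    rw [h2, Real.sqrt_div ha.le, pow_succ, hc_def]
    field_simp
  -- pointwise expansion
  have hpt : ∀ x : ℝ, φ x * Real.exp (-φ x) = ∑' k : ℕ, f k x := by
    intro x
    rw [Real.exp_eq_exp_ℝ, NormedSpace.exp_eq_tsum_div, ← tsum_mul_left]
    congr 1
    funext k
    rw [hf_def, neg_pow]
    ring
  -- norm integral values
  have hJ : ∀ k : ℕ, (∫ x : ℝ, ((k.factorial : ℝ))⁻¹ * φ x ^ (k + 1)) =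
      ((k.factorial : ℝ))⁻¹ * (c ^ k / Real.sqrt ((k : ℝ) + 1)) := by
    intro k
    rw [integral_const_mul, hI]
  have hsqrt_ge : ∀ k : ℕ, (1 : ℝ) ≤ Real.sqrt ((k : ℝ) + 1) := by
    intro k
    have h1 := Real.sqrt_le_sqrt (show (1 : ℝ) ≤ (k : ℝ) + 1 by have := Nat.cast_nonneg (α := ℝ) k; linarith)
    simp only [Real.sqrt_one] at h1
    exact h1
  have hJle : ∀ k : ℕ, ((k.factorial : ℝ))⁻¹ * (c ^ k / Real.sqrt ((k : ℝ) + 1)) ≤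
      c ^ k / k.factorial := by
    intro k
    have h1 : c ^ k / Real.sqrt ((k : ℝ) + 1) ≤ c ^ k := by
      apply div_le_self (by positivity) (hsqrt_ge k)
    calc ((k.factorial : ℝ))⁻¹ * (c ^ k / Real.sqrt ((k : ℝ) + 1))
        ≤ ((k.factorial : ℝ))⁻¹ * c ^ k := by
          apply mul_le_mul_of_nonneg_left h1 (by positivity)
      _ = c ^ k / k.factorial := by ring
  have hJnonneg : ∀ k : ℕ, (0 : ℝ) ≤ ((k.factorial : ℝ))⁻¹ * (c ^ k / Real.sqrt ((k : ℝ) + 1)) :=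
    fun k => by positivity
  have hJsummable : Summable (fun k : ℕ =>
      ((k.factorial : ℝ))⁻¹ * (c ^ k / Real.sqrt ((k : ℝ) + 1))) := by
    apply Summable.of_nonneg_of_le hJnonneg hJle
    exact Real.summable_pow_div_factorial c
  -- the series of integrals
  set I : ℕ → ℝ := fun k => ((-1 : ℝ) ^ k / k.factorial) * (c ^ k / Real.sqrt ((k : ℝ) + 1))
    with hI_def
  have hfint : ∀ k : ℕ, Integrable (f k) := by
    intro k
    exact (hint k).const_mul _
  have hfI : ∀ k : ℕ, (∫ x : ℝ, f k x) = I k := by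
    intro k
    rw [hf_def, hI_def]
    simp only
    rw [integral_const_mul, hI]
  have hIsummable : Summable I := by
    apply Summable.of_norm_bounded hJsummable
    intro k
    rw [hI_def]
    simp only
    rw [norm_mul, norm_div, norm_pow, norm_neg, norm_one, one_pow]
    rw [Real.norm_natCast, Real.norm_of_nonneg (by positivity), one_div]
  -- swap integral and sum
  have hswap : (∫ x : ℝ, ∑' k : ℕ, f k x) = ∑' k : ℕ, ∫ x : ℝ, f k x := by
    apply integral_tsum
    · intro k
      exact (continuous_const.mul (hφcont.pow _)).aestronglyMeasurable
    · have hnorm : ∀ k : ℕ, (∫⁻ x : ℝ, ‖f k x‖ₑ) =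
          ENNReal.ofReal (((k.factorial : ℝ))⁻¹ * (c ^ k / Real.sqrt ((k : ℝ) + 1))) := by
        intro k
        have habs : ∀ x : ℝ, (‖f k x‖ₑ : ENNReal) =
            ENNReal.ofReal (((k.factorial : ℝ))⁻¹ * φ x ^ (k + 1)) := by
          intro x
          rw [← ofReal_norm]
          congr 1
          rw [hf_def]
          simp only
          rw [norm_mul, norm_div, norm_pow, norm_neg, norm_one, one_pow,
            Real.norm_natCast, Real.norm_of_nonneg (by positivity), one_div]
        rw [lintegral_congr habs, ← ofReal_integral_eq_lintegral_ofReal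
          ((hint k).const_mul _) (Filter.Eventually.of_forall fun x => by positivity), hJ]
      rw [show (fun k : ℕ => ∫⁻ x : ℝ, ‖f k x‖ₑ) = fun k : ℕ =>
          ENNReal.ofReal (((k.factorial : ℝ))⁻¹ * (c ^ k / Real.sqrt ((k : ℝ) + 1)))
        from funext hnorm] at *
      rw [← ENNReal.ofReal_tsum_of_nonneg hJnonneg hJsummable]
      exact ENNReal.ofReal_ne_top
  -- identify c powers with rpow
  have hcpow : ∀ n : ℕ, c ^ (n + 1) = a ^ (-((n : ℝ) + 1) / 2) := by
    intro n
    rw [hc_def, Real.sqrt_eq_rpow, ← Real.rpow_neg_one (a ^ ((1 : ℝ) / 2)),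
      ← Real.rpow_natCast ((a ^ ((1 : ℝ) / 2)) ^ (-1 : ℝ)) (n + 1),
      ← Real.rpow_mul ha.le, ← Real.rpow_mul ha.le]
    congr 1
    push_cast
    ring
  have hterm : ∀ n : ℕ, I (n + 1) =
      ((-1 : ℝ) ^ (n + 1) / (n + 1).factorial) * (Real.sqrt ((n : ℝ) + 2))⁻¹ *
        a ^ (-((n : ℝ) + 1) / 2) := by
    intro n
    rw [hI_def]
    simp only
    rw [hcpow n]
    rw [show ((n + 1 : ℕ) : ℝ) + 1 = (n : ℝ) + 2 by push_cast; ring]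
    rw [div_eq_mul_inv (a ^ (-((n : ℝ) + 1) / 2))]
    ring
  constructor
  · have h1 : Summable (fun n : ℕ => I (n + 1)) := (summable_nat_add_iff 1).mpr hIsummable
    refine h1.congr fun n => hterm n
  · have hLHS : (∫ x : ℝ,
        ((Real.sqrt (2 * π * σ ^ 2))⁻¹ * Real.exp (-(x - μ) ^ 2 / (2 * σ ^ 2))) *
          Real.exp
            (-((Real.sqrt (2 * π * σ ^ 2))⁻¹ * Real.exp (-(x - μ) ^ 2 / (2 * σ ^ 2))))) =
        ∫ x : ℝ, ∑' k : ℕ, f k x := by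
      apply integral_congr_ae
      filter_upwards with x
      exact hpt x
    rw [hLHS, hswap]
    rw [show (fun k : ℕ => ∫ x : ℝ, f k x) = I from funext hfI]
    rw [hIsummable.tsum_eq_zero_add]
    congr 1
    · rw [hI_def]
      norm_num
    · exact tsum_congr hterm
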